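/- Let L be a complete lattice and let f : D(L) → ℝ be an abstract observable function. Then the image of f is a compact subset of ℝ. -/

import Mathlib

/-- A dual ideal in a complete lattice: a nonempty subset not containing `⊥`,
closed under binary meets and upward closed. -/
def IsDualIdeal {L : Type*} [CompleteLattice L] (J : Set L) : Prop :=
  J.Nonempty ∧ ⊥ ∉ J ∧ (∀ a ∈ J, ∀ b ∈ J, a ⊓ b ∈ J) ∧ ∀ a ∈ J, ∀ b, a ≤ b → b ∈ J

/-- An abstract observable function on the dual ideals of a complete lattice:
upper semicontinuous, and satisfying the intersection condition
`f(⋂ S) = sup (f '' S)` for every nonempty family `S` of dual ideals. -/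
def IsObservableFunction {L : Type*} [CompleteLattice L] (f : Set L → ℝ) : Prop :=
  (∀ J₀ : Set L, IsDualIdeal J₀ → ∀ ε : ℝ, 0 < ε →
      ∃ P ∈ J₀, ∀ J : Set L, IsDualIdeal J → P ∈ J → f J < f J₀ + ε) ∧
  ∀ S : Set (Set L), S.Nonempty → (∀ J ∈ S, IsDualIdeal J) →
    IsLUB (f '' S) (f (⋂₀ S))

section Aux
variable {L : Type*} [CompleteLattice L]

lemma IsDualIdeal.top_mem {J : Set L} (h : IsDualIdeal J) : ⊤ ∈ J := by
  obtain ⟨⟨a, ha⟩, -, -, h4⟩ := h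
  exact h4 a ha ⊤ le_top

lemma isDualIdeal_sInter {S : Set (Set L)} (hS : S.Nonempty)
    (h : ∀ J ∈ S, IsDualIdeal J) : IsDualIdeal (⋂₀ S) := by
  refine ⟨⟨⊤, fun J hJ => (h J hJ).top_mem⟩, ?_, ?_, ?_⟩
  · obtain ⟨J, hJ⟩ := hS
    exact fun hbot => (h J hJ).2.1 (hbot J hJ)
  · exact fun a ha b hb J hJ => (h J hJ).2.2.1 a (ha J hJ) b (hb J hJ)
  · exact fun a ha b hab J hJ => (h J hJ).2.2.2 a (ha J hJ) b hab

lemma isDualIdeal_iUnion {K : ℕ → Set L} (hmono : Monotone K)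
    (h : ∀ n, IsDualIdeal (K n)) : IsDualIdeal (⋃ n, K n) := by
  refine ⟨⟨⊤, Set.mem_iUnion.mpr ⟨0, (h 0).top_mem⟩⟩, ?_, ?_, ?_⟩
  · intro hbot
    obtain ⟨n, hn⟩ := Set.mem_iUnion.mp hbot
    exact (h n).2.1 hn
  · intro a ha b hb
    obtain ⟨m, hm⟩ := Set.mem_iUnion.mp ha
    obtain ⟨n, hn⟩ := Set.mem_iUnion.mp hb
    exact Set.mem_iUnion.mpr ⟨max m n,
      (h _).2.2.1 a (hmono (le_max_left m n) hm) b (hmono (le_max_right m n) hn)⟩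
  · intro a ha b hab
    obtain ⟨n, hn⟩ := Set.mem_iUnion.mp ha
    exact Set.mem_iUnion.mpr ⟨n, (h n).2.2.2 a hn b hab⟩

lemma obs_antitone {f : Set L → ℝ} (hf : IsObservableFunction f)
    {J K : Set L} (hJ : IsDualIdeal J) (hK : IsDualIdeal K) (hJK : J ⊆ K) :
    f K ≤ f J := by
  have h := hf.2 {J, K} ⟨J, by simp⟩ (by rintro x (rfl | rfl) <;> assumption)
  rw [Set.sInter_pair, Set.inter_eq_left.mpr hJK] at h
  exact h.1 ⟨K, by simp, rfl⟩

end Aux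


/-- The image of an abstract observable function (on the dual ideals) is a
compact subset of ℝ. -/
theorem stmt13 {L : Type*} [CompleteLattice L] (f : Set L → ℝ)
    (hf : IsObservableFunction f) :
    IsCompact {y : ℝ | ∃ J : Set L, IsDualIdeal J ∧ f J = y} := by
  set T : Set ℝ := {y : ℝ | ∃ J : Set L, IsDualIdeal J ∧ f J = y} with hT
  by_cases hD : ∃ J : Set L, IsDualIdeal J
  · -- main machinery: from a sequence of dual ideals, build tail intersections and their union
    -- key construction, used for both bddBelow and closedness
    have key : ∀ (J : ℕ → Set L), (∀ n, IsDualIdeal (J n)) →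
        ∃ K : ℕ → Set L, ∃ Kω : Set L, (∀ n, IsDualIdeal (K n)) ∧ IsDualIdeal Kω ∧
          (∀ n, IsLUB (f '' (J '' Set.Ici n)) (f (K n))) ∧
          (∀ n, f Kω ≤ f (K n)) ∧
          (∀ P ∈ Kω, ∃ n, P ∈ K n) := by
      intro J hJ
      set K : ℕ → Set L := fun n => ⋂₀ (J '' Set.Ici n) with hK
      have hKdi : ∀ n, IsDualIdeal (K n) := fun n =>
        isDualIdeal_sInter ⟨J n, ⟨n, le_refl n, rfl⟩⟩ (by rintro _ ⟨m, -, rfl⟩; exact hJ m)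
      have hKmono : Monotone K := fun m n hmn =>
        Set.sInter_subset_sInter (Set.image_mono (f := J) (Set.Ici_subset_Ici.mpr hmn))
      refine ⟨K, ⋃ n, K n, hKdi, isDualIdeal_iUnion hKmono hKdi, ?_, ?_, ?_⟩
      · intro n
        have := hf.2 (J '' Set.Ici n) ⟨J n, ⟨n, le_refl n, rfl⟩⟩
          (by rintro _ ⟨m, -, rfl⟩; exact hJ m)
        exact this
      · intro n
        exact obs_antitone hf (hKdi n) (isDualIdeal_iUnion hKmono hKdi)
          (Set.subset_iUnion K n)
      · exact fun P hP => Set.mem_iUnion.mp hP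
    rw [Metric.isCompact_iff_isClosed_bounded]
    constructor
    · -- closedness
      refine isClosed_of_closure_subset fun y hy => ?_
      obtain ⟨u, hu_mem, hu_lim⟩ := mem_closure_iff_seq_limit.mp hy
      choose J hJdi hJf using hu_mem
      obtain ⟨K, Kω, hKdi, hKωdi, hKlub, hKle, hKmem⟩ := key J hJdi
      have h1 : f Kω ≤ y := by
        refine le_of_forall_pos_le_add fun ε hε => ?_
        obtain ⟨N, hN⟩ := Metric.tendsto_atTop.mp hu_lim ε hε
        have hub : y + ε ∈ upperBounds (f '' (J '' Set.Ici N)) := by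
          rintro _ ⟨_, ⟨m, hm, rfl⟩, rfl⟩
          have h := abs_lt.mp ((Real.dist_eq _ _) ▸ hN m hm)
          rw [hJf m]
          linarith [h.1, h.2]
        exact le_trans (hKle N) ((hKlub N).2 hub)
      have h2 : y ≤ f Kω := by
        refine le_of_forall_pos_le_add fun ε hε => ?_
        obtain ⟨P, hP, hP2⟩ := hf.1 Kω hKωdi ε hε
        obtain ⟨n, hn⟩ := hKmem P hP
        have hy_le : y ≤ f (K n) := by
          refine le_of_tendsto hu_lim (Filter.eventually_atTop.mpr ⟨n, fun m hm => ?_⟩)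
          rw [← hJf m]
          exact (hKlub n).1 ⟨J m, ⟨m, hm, rfl⟩, rfl⟩
        linarith [hP2 (K n) (hKdi n) hn]
      exact ⟨Kω, hKωdi, le_antisymm h1 h2⟩
    · rw [isBounded_iff_bddBelow_bddAbove]
      constructor
      · -- bounded below
        by_contra hnb
        have hex : ∀ n : ℕ, ∃ y ∈ T, y < -(n : ℝ) := fun n =>
          (not_bddBelow_iff.mp hnb) (-(n : ℝ))
        choose y hyT hylt using hex
        choose J hJdi hJf using hyT
        obtain ⟨K, Kω, hKdi, hKωdi, hKlub, hKle, -⟩ := key J hJdi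
        have hbd : ∀ n : ℕ, f Kω ≤ -(n : ℝ) := by
          intro n
          refine le_trans (hKle n) ((hKlub n).2 ?_)
          rintro _ ⟨_, ⟨m, hm, rfl⟩, rfl⟩
          have : ((n : ℝ)) ≤ (m : ℝ) := Nat.cast_le.mpr hm
          rw [hJf m]
          linarith [hylt m]
        obtain ⟨n, hn⟩ := exists_nat_gt (-(f Kω))
        linarith [hbd n]
      · -- bounded above
        have hTim : T = f '' {J : Set L | IsDualIdeal J} := by
          ext y
          simp only [hT, Set.mem_setOf_eq, Set.mem_image]
        have h := hf.2 {J : Set L | IsDualIdeal J} hD (fun J h => h)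
        rw [hTim]
        exact ⟨_, h.1⟩
  · have : T = ∅ := by
      ext y; simp only [hT, Set.mem_setOf_eq, Set.mem_empty_iff_false, iff_false]
      rintro ⟨J, hJ, -⟩; exact hD ⟨J, hJ⟩
    rw [this]; exact isCompact_empty
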